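/- Let f : ℝ → ℝ be twice continuously differentiable and satisfy f(u)(1 + f′(u)²) = f″(u)(1 + f(u)²) for all u. Define f¹(u, v) = f(u)cos v and f²(u, v) = f(u)sin v. Then the graph (u, v, f¹(u, v), f²(u, v)) in ℝ⁴ satisfies the minimal surface equations: g₂₂ ∂²f^k/∂u² + g₁₁ ∂²f^k/∂v² − 2 g₁₂ ∂²f^k/∂u∂v = 0 for k = 1, 2, where g₁₁ = 1 + (∂f¹/∂u)² + (∂f²/∂u)², g₂₂ = 1 + (∂f¹/∂v)² + (∂f²/∂v)², g₁₂ = (∂f¹/∂u)(∂f¹/∂v) + (∂f²/∂u)(∂f²/∂v). -/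

import Mathlib

noncomputable section

/-- Partial derivative in the first variable. -/
def pd1 (F : ℝ → ℝ → ℝ) (u v : ℝ) : ℝ := deriv (fun x => F x v) u

/-- Partial derivative in the second variable. -/
def pd2 (F : ℝ → ℝ → ℝ) (u v : ℝ) : ℝ := deriv (fun y => F u y) v

/-- The minimal surface equations for the graph `(u, v, F1(u,v), F2(u,v)) ⊂ ℝ⁴`:
`g₂₂ ∂²F_k/∂u² + g₁₁ ∂²F_k/∂v² − 2 g₁₂ ∂²F_k/∂u∂v = 0` for `k = 1, 2`, where
`g₁₁ = 1 + (∂F1/∂u)² + (∂F2/∂u)²`, `g₂₂ = 1 + (∂F1/∂v)² + (∂F2/∂v)²`,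
`g₁₂ = (∂F1/∂u)(∂F1/∂v) + (∂F2/∂u)(∂F2/∂v)`. -/
def MinimalGraphEq (F1 F2 : ℝ → ℝ → ℝ) (u v : ℝ) : Prop :=
  ((1 + (pd2 F1 u v) ^ 2 + (pd2 F2 u v) ^ 2) * pd1 (pd1 F1) u v
    + (1 + (pd1 F1 u v) ^ 2 + (pd1 F2 u v) ^ 2) * pd2 (pd2 F1) u v
    - 2 * (pd1 F1 u v * pd2 F1 u v + pd1 F2 u v * pd2 F2 u v) * pd1 (pd2 F1) u v = 0) ∧
  ((1 + (pd2 F1 u v) ^ 2 + (pd2 F2 u v) ^ 2) * pd1 (pd1 F2) u v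
    + (1 + (pd1 F1 u v) ^ 2 + (pd1 F2 u v) ^ 2) * pd2 (pd2 F2) u v
    - 2 * (pd1 F1 u v * pd2 F1 u v + pd1 F2 u v * pd2 F2 u v) * pd1 (pd2 F2) u v = 0)

/-- if `f` is C² and solves `f(1 + (f′)²) = f″(1 + f²)`, then the
graph `(u, v, f(u)cos v, f(u)sin v)` satisfies the minimal surface equations. -/
theorem stmt14 (f : ℝ → ℝ) (hf : ContDiff ℝ 2 f)
    (hode : ∀ u : ℝ, f u * (1 + (deriv f u) ^ 2) = deriv (deriv f) u * (1 + (f u) ^ 2))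
    (u v : ℝ) :
    MinimalGraphEq (fun u v => f u * Real.cos v) (fun u v => f u * Real.sin v) u v := by
  have hd : Differentiable ℝ f := hf.differentiable (by norm_num)
  have hd' : Differentiable ℝ (deriv f) :=
    ((contDiff_succ_iff_deriv.mp (show ContDiff ℝ (1+1) f from by exact_mod_cast hf)).2.2).differentiable (by norm_num)
  -- pd1 of F1
  have h1 : ∀ x y : ℝ, pd1 (fun a b => f a * Real.cos b) x y = deriv f x * Real.cos y := by
    intro x y
    simp [pd1, deriv_mul_const (hd x)]
  have h2 : ∀ x y : ℝ, pd2 (fun a b => f a * Real.cos b) x y = -(f x * Real.sin y) := by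
    intro x y
    simp [pd2]
  have h3 : ∀ x y : ℝ, pd1 (fun a b => f a * Real.sin b) x y = deriv f x * Real.sin y := by
    intro x y
    simp [pd1, deriv_mul_const (hd x)]
  have h4 : ∀ x y : ℝ, pd2 (fun a b => f a * Real.sin b) x y = f x * Real.cos y := by
    intro x y
    simp [pd2]
  have h11c : pd1 (pd1 (fun a b => f a * Real.cos b)) u v = deriv (deriv f) u * Real.cos v := by
    have : (fun x => pd1 (fun a b => f a * Real.cos b) x v) = fun x => deriv f x * Real.cos v :=
      funext fun x => h1 x v
    rw [pd1, this, deriv_mul_const (hd' u)]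
  have h22c : pd2 (pd2 (fun a b => f a * Real.cos b)) u v = -(f u * Real.cos v) := by
    have : (fun y => pd2 (fun a b => f a * Real.cos b) u y) = fun y => -(f u * Real.sin y) :=
      funext fun y => h2 u y
    rw [pd2, this]
    simp
  have h12c : pd1 (pd2 (fun a b => f a * Real.cos b)) u v = -(deriv f u * Real.sin v) := by
    have : (fun x => pd2 (fun a b => f a * Real.cos b) x v) = fun x => -(f x * Real.sin v) :=
      funext fun x => h2 x v
    rw [pd1, this]
    simp [deriv_mul_const (hd _)]
  have h11s : pd1 (pd1 (fun a b => f a * Real.sin b)) u v = deriv (deriv f) u * Real.sin v := by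
    have : (fun x => pd1 (fun a b => f a * Real.sin b) x v) = fun x => deriv f x * Real.sin v :=
      funext fun x => h3 x v
    rw [pd1, this, deriv_mul_const (hd' u)]
  have h22s : pd2 (pd2 (fun a b => f a * Real.sin b)) u v = -(f u * Real.sin v) := by
    have : (fun y => pd2 (fun a b => f a * Real.sin b) u y) = fun y => f u * Real.cos y :=
      funext fun y => h4 u y
    rw [pd2, this]
    simp
  have h12s : pd1 (pd2 (fun a b => f a * Real.sin b)) u v = deriv f u * Real.cos v := by
    have : (fun x => pd2 (fun a b => f a * Real.sin b) x v) = fun x => f x * Real.cos v :=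
      funext fun x => h4 x v
    rw [pd1, this, deriv_mul_const (hd _)]
  have hsc := Real.sin_sq_add_cos_sq v
  constructor
  · rw [h1 u v, h2 u v, h3 u v, h4 u v, h11c, h22c, h12c]
    linear_combination (-(Real.cos v)) * hode u
      + (f u ^ 2 * deriv (deriv f) u * Real.cos v - (deriv f u) ^ 2 * f u * Real.cos v) * hsc
  · rw [h1 u v, h2 u v, h3 u v, h4 u v, h11s, h22s, h12s]
    linear_combination (-(Real.sin v)) * hode u
      + (f u ^ 2 * deriv (deriv f) u * Real.sin v - (deriv f u) ^ 2 * f u * Real.sin v) * hsc
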